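/- Let α < 0 and define f_α(x,y) := (x-y)^α + (x+y)^α - 2x^α for real x > y > 0. Then f_α(x,y) is positive and satisfies the bound f_α(x,y) < 2α(α-1) y² (x-y)^{α-2}. -/

import Mathlib

theorem stmt1 (α x y : ℝ) (hα : α < 0) (hy : 0 < y) (hxy : y < x) :
    0 < (x - y) ^ α + (x + y) ^ α - 2 * x ^ α ∧
    (x - y) ^ α + (x + y) ^ α - 2 * x ^ α < 2 * α * (α - 1) * y ^ 2 * (x - y) ^ (α - 2) := by
  have hx : 0 < x := hy.trans hxy
  have hxy' : 0 < x - y := by linarith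
  have hcont : ∀ a : ℝ, 0 < a → ContinuousOn (fun t : ℝ => t ^ α) (Set.Icc a (a + y + y)) := by
    intro a ha
    intro t ht
    exact (Real.continuousAt_rpow_const t α (Or.inl (by nlinarith [ht.1]))).continuousWithinAt
  have hmvt : ∀ a b : ℝ, 0 < a → a < b →
      ∃ c ∈ Set.Ioo a b, α * c ^ (α - 1) = (b ^ α - a ^ α) / (b - a) := by
    intro a b ha hab
    apply exists_hasDerivAt_eq_slope (fun t : ℝ => t ^ α) (fun t => α * t ^ (α - 1)) hab
    · intro t ht
      exact (Real.continuousAt_rpow_const t α (Or.inl (by nlinarith [ht.1]))).continuousWithinAt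
    · intro t ht
      exact Real.hasDerivAt_rpow_const (Or.inl (by nlinarith [ht.1]))
  obtain ⟨c₁, hc₁, hslope₁⟩ := hmvt x (x + y) hx (by linarith)
  obtain ⟨c₂, hc₂, hslope₂⟩ := hmvt (x - y) x hxy' (by linarith)
  have hc₁0 : 0 < c₁ := hx.trans hc₁.1
  have hc₂0 : 0 < c₂ := hxy'.trans hc₂.1
  have he₁ : (x + y) ^ α - x ^ α = y * (α * c₁ ^ (α - 1)) := by
    rw [hslope₁, add_sub_cancel_left]; field_simp
  have he₂ : x ^ α - (x - y) ^ α = y * (α * c₂ ^ (α - 1)) := by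
    rw [hslope₂, sub_sub_cancel]; field_simp
  -- second MVT on φ t = α * t ^ (α - 1) between c₂ and c₁
  have hc₂₁ : c₂ < c₁ := hc₂.2.trans hc₁.1
  obtain ⟨c₃, hc₃, hslope₃⟩ :
      ∃ c ∈ Set.Ioo c₂ c₁, α * ((α - 1) * c ^ (α - 1 - 1)) =
        (α * c₁ ^ (α - 1) - α * c₂ ^ (α - 1)) / (c₁ - c₂) := by
    apply exists_hasDerivAt_eq_slope (fun t : ℝ => α * t ^ (α - 1))
      (fun t => α * ((α - 1) * t ^ (α - 1 - 1))) hc₂₁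
    · intro t ht
      exact ((Real.continuousAt_rpow_const t (α - 1)
        (Or.inl (by nlinarith [ht.1]))).const_smul α).continuousWithinAt
    · intro t ht
      exact (Real.hasDerivAt_rpow_const (p := α - 1)
        (Or.inl (by nlinarith [ht.1]))).const_mul α
  have hc₃0 : 0 < c₃ := hc₂0.trans hc₃.1
  have he₃ : α * c₁ ^ (α - 1) - α * c₂ ^ (α - 1) =
      (c₁ - c₂) * (α * (α - 1) * c₃ ^ (α - 2)) := by
    have h := hslope₃
    rw [eq_div_iff (by linarith : c₁ - c₂ ≠ 0)] at h
    have : α - 1 - 1 = α - 2 := by ring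
    rw [this] at h
    linarith [h]
  have hK : 0 < α * (α - 1) := mul_pos_of_neg_of_neg hα (by linarith)
  have hB : (0:ℝ) < c₃ ^ (α - 2) := Real.rpow_pos_of_pos hc₃0 _
  have hBD : c₃ ^ (α - 2) < (x - y) ^ (α - 2) :=
    Real.rpow_lt_rpow_of_neg hxy' (by linarith [hc₂.1, hc₃.1]) (by linarith)
  have hA : 0 < c₁ - c₂ := by linarith
  have hA2 : c₁ - c₂ < 2 * y := by linarith [hc₁.2, hc₂.1]
  have hf : (x - y) ^ α + (x + y) ^ α - 2 * x ^ α =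
      y * ((c₁ - c₂) * (α * (α - 1) * c₃ ^ (α - 2))) := by
    have : (x - y) ^ α + (x + y) ^ α - 2 * x ^ α =
        ((x + y) ^ α - x ^ α) - (x ^ α - (x - y) ^ α) := by ring
    rw [this, he₁, he₂, ← he₃]; ring
  constructor
  · rw [hf]
    positivity
  · rw [hf]
    have hD : (0:ℝ) < (x - y) ^ (α - 2) := Real.rpow_pos_of_pos hxy' _
    have h1 : (c₁ - c₂) * c₃ ^ (α - 2) < 2 * y * ((x - y) ^ (α - 2)) := by
      nlinarith
    nlinarith [mul_lt_mul_of_pos_left h1 (mul_pos hy hK)]
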